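/- Let d ∈ ℕ, let F : (Fin d → ℝ) → (Fin d → ℝ), and let S : ℝ → (Fin d → ℝ) → (Fin d → ℝ) be a flow of F, i.e. S 0 x = x for all x and for every x the curve t ↦ S t x is differentiable at every t ∈ ℝ with derivative F (S t x). Let λ ∈ ℂ and let g : (Fin d → ℝ) → ℂ be differentiable with fderiv ℝ g x (F x) = λ * g x for every x (g solves the linear PDE ∇g · F = λ g). Then g (S t x) = Complex.exp (λ * t) * g x for all t ∈ ℝ and all x; that is, g is a Koopman eigenfunction of the flow S with eigenvalue λ. (Converse direction of Theorem 2 of the paper: solutions of the Koopman PDE are Koopman eigenfunctions.) -/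

import Mathlib

/-- Converse direction of Theorem 2 of the paper: a differentiable solution of the linear
PDE ∇g · F = λ g is a Koopman eigenfunction of the flow S of F with eigenvalue λ. -/
theorem pde_solution_is_koopman_eigenfunction
    {d : ℕ} (F : (Fin d → ℝ) → (Fin d → ℝ))
    (S : ℝ → (Fin d → ℝ) → (Fin d → ℝ))
    (hS0 : ∀ x, S 0 x = x)
    (hS : ∀ x : Fin d → ℝ, ∀ t : ℝ, HasDerivAt (fun s => S s x) (F (S t x)) t)
    (lam : ℂ) (g : (Fin d → ℝ) → ℂ) (hg : Differentiable ℝ g)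
    (hpde : ∀ x : Fin d → ℝ, fderiv ℝ g x (F x) = lam * g x) :
    ∀ t : ℝ, ∀ x : Fin d → ℝ, g (S t x) = Complex.exp (lam * t) * g x := by
  intro t x
  set h : ℝ → ℂ := fun s => Complex.exp (-lam * s) * g (S s x) with hh
  have hderiv : ∀ s : ℝ, HasDerivAt h 0 s := by
    intro s
    have h1 : HasDerivAt (fun u : ℝ => Complex.exp (-lam * u))
        (-lam * Complex.exp (-lam * s)) s := by
      have := (((hasDerivAt_id s).ofReal_comp).const_mul (-lam)).cexp
      simpa [mul_comm] using this
    have h2 : HasDerivAt (fun u : ℝ => g (S u x)) (lam * g (S s x)) s := by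
      have := ((hg (S s x)).hasFDerivAt).comp_hasDerivAt s (hS x s)
      rwa [hpde (S s x)] at this
    have := h1.mul h2
    exact this.congr_deriv (by ring)
  have hconst : h t = h 0 :=
    is_const_of_deriv_eq_zero (fun s => (hderiv s).differentiableAt)
      (fun s => (hderiv s).deriv) t 0
  have h0 : h 0 = g x := by simp [hh, hS0]
  have ht : h t = Complex.exp (-lam * t) * g (S t x) := rfl
  have key : Complex.exp (-lam * t) * g (S t x) = g x := by rw [← ht, hconst, h0]
  have hne : Complex.exp (-lam * t) ≠ 0 := Complex.exp_ne_zero _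
  calc g (S t x) = Complex.exp (lam * t) * (Complex.exp (-lam * t) * g (S t x)) := by
        rw [← mul_assoc, ← Complex.exp_add]; simp
    _ = Complex.exp (lam * t) * g x := by rw [key]
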